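/- (Sample-level shell separation.) Fix 0 < β₁ < β₀ and a sample size n ≥ 1. For each integer m ≥ 1, let X_1^{(m)}, …, X_n^{(m)} be i.i.d. with law MGGD(0, I_m, β₀) and, independently, Y_1^{(m)}, …, Y_n^{(m)} be i.i.d. with law MGGD(0, I_m, β₁). Then P(min_{1≤i≤n} ‖Y_i^{(m)}‖ > max_{1≤j≤n} ‖X_j^{(m)}‖) → 1 as m → ∞. -/

import Mathlib

open MeasureTheory Real Filter Topology
open Set
open scoped ENNReal NNReal

lemma lintegral_fun_norm_addHaar' {E : Type*} [NormedAddCommGroup E] [NormedSpace ℝ E]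
    [MeasurableSpace E] [Nontrivial E] [FiniteDimensional ℝ E] [BorelSpace E]
    (μ : Measure E) [μ.IsAddHaarMeasure] (g : ℝ → ℝ≥0∞) (hg : Measurable g) :
    ∫⁻ x, g ‖x‖ ∂μ = (Module.finrank ℝ E) * μ (Metric.ball 0 1) *
      ∫⁻ y in Set.Ioi (0:ℝ), ENNReal.ofReal (y ^ (Module.finrank ℝ E - 1)) * g y := by
  have h1 : ∫⁻ x, g ‖x‖ ∂μ
      = ∫⁻ x : ({0}ᶜ : Set E), g ‖(x : E)‖ ∂(μ.comap Subtype.val) := by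
    rw [lintegral_subtype_comap (measurableSet_singleton (0:E)).compl (fun x => g ‖x‖),
      restrict_compl_singleton]
  have h2 := (μ.measurePreserving_homeomorphUnitSphereProd).lintegral_comp_emb
    (Homeomorph.measurableEmbedding _) (fun p : Metric.sphere (0:E) 1 × Set.Ioi (0:ℝ) => g p.2.1)
  rw [h1]
  simp only [← homeomorphUnitSphereProd_apply_snd_coe] 
  rw [h2]
  have h3 : ∫⁻ p : Metric.sphere (0:E) 1 × Set.Ioi (0:ℝ), g p.2.1
      ∂(μ.toSphere.prod (Measure.volumeIoiPow (Module.finrank ℝ E - 1)))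
      = μ.toSphere Set.univ * ∫⁻ y : Set.Ioi (0:ℝ), g y.1
          ∂(Measure.volumeIoiPow (Module.finrank ℝ E - 1)) := by
    have hm : AEMeasurable (fun p : Metric.sphere (0:E) 1 × Set.Ioi (0:ℝ) => g p.2.1)
        (μ.toSphere.prod (Measure.volumeIoiPow (Module.finrank ℝ E - 1))) :=
      (hg.comp (measurable_subtype_coe.comp measurable_snd)).aemeasurable
    rw [lintegral_prod _ hm]
    simp [lintegral_const]
    ring
  rw [h3, Measure.toSphere_apply_univ]
  congr 1
  have hg' : Measurable (fun y : Set.Ioi (0:ℝ) => g y.1) := hg.comp measurable_subtype_coe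
  rw [Measure.volumeIoiPow, lintegral_withDensity_eq_lintegral_mul _ (by fun_prop) hg']
  simp only [Pi.mul_apply]
  rw [lintegral_subtype_comap measurableSet_Ioi
      (fun y => ENNReal.ofReal (y ^ (Module.finrank ℝ E - 1)) * g y)]

lemma integrableOn_rpow_mul_exp_neg_mul_rpow' {p q b : ℝ} (hp : 0 < p) (hq : -1 < q) (hb : 0 < b) :
    IntegrableOn (fun x : ℝ => x ^ q * Real.exp (-b * x ^ p)) (Set.Ioi 0) := by
  set s : ℝ := (q + 1) / p with hs
  have hs0 : 0 < s := div_pos (by linarith) hp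
  -- integrability of the Gamma-type integrand with rate b
  have h0 : IntegrableOn (fun y : ℝ => Real.exp (-y) * y ^ (s - 1)) (Set.Ioi 0) :=
    Real.GammaIntegral_convergent hs0
  have h1 : IntegrableOn (fun y : ℝ => Real.exp (-(b * y)) * (b * y) ^ (s - 1)) (Set.Ioi 0) := by
    have := (integrableOn_Ioi_comp_mul_left_iff
      (fun y : ℝ => Real.exp (-y) * y ^ (s - 1)) 0 hb).2 (by simpa using h0)
    simpa using this
  have h2 : IntegrableOn (fun y : ℝ => Real.exp (-(b * y)) * y ^ (s - 1)) (Set.Ioi 0) := by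
    have h1' : IntegrableOn (fun y : ℝ => b ^ (1 - s) * (Real.exp (-(b * y)) * (b * y) ^ (s - 1)))
        (Set.Ioi 0) := h1.const_mul (b ^ (1 - s))
    apply h1'.congr_fun ?_ measurableSet_Ioi
    intro y hy
    simp only []
    rw [Real.mul_rpow hb.le (le_of_lt hy)]
    rw [show b ^ (1-s) * (Real.exp (-(b*y)) * (b ^ (s-1) * y ^ (s-1)))
      = (b ^ (1-s) * b ^ (s-1)) * (Real.exp (-(b*y)) * y ^ (s-1)) by ring,
      ← Real.rpow_add hb]
    norm_num
  -- substitute y = x ^ p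
  have h3 := (integrableOn_Ioi_comp_rpow_iff'
    (fun y : ℝ => Real.exp (-(b * y)) * y ^ (s - 1)) hp.ne').2 h2
  apply h3.congr_fun ?_ measurableSet_Ioi
  intro x hx
  have hx0 : (0:ℝ) < x := hx
  have hps : p * s = q + 1 := by
    rw [hs]; field_simp
  simp only [smul_eq_mul]
  rw [← Real.rpow_mul hx0.le,
    show x ^ (p-1) * (Real.exp (-(b * x ^ p)) * x ^ (p*(s-1)))
      = x ^ (p-1) * x ^ (p*(s-1)) * Real.exp (-(b * x ^ p)) from by ring,
    ← Real.rpow_add hx0, show p - 1 + p*(s-1) = q from by nlinarith, neg_mul]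

lemma lintegral_exp_neg_norm_rpow (m : ℕ) (hm : 1 ≤ m) {β s : ℝ} (hβ : 0 < β) (hs : 0 < s) :
    ∫⁻ x : EuclideanSpace ℝ (Fin m), ENNReal.ofReal (Real.exp (-(s * ‖x‖ ^ (2*β))))
      = ENNReal.ofReal (π ^ ((m:ℝ)/2) * Real.Gamma ((m:ℝ)/(2*β)) / (β * Real.Gamma ((m:ℝ)/2))
          * s ^ (-((m:ℝ)/(2*β)))) := by
  haveI : Nonempty (Fin m) := ⟨⟨0, hm⟩⟩
  haveI : Nontrivial (EuclideanSpace ℝ (Fin m)) := by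
    have : 0 < Module.finrank ℝ (EuclideanSpace ℝ (Fin m)) := by
      rw [finrank_euclideanSpace_fin]; exact hm
    exact Module.nontrivial_of_finrank_pos this
  have hg : Measurable (fun r : ℝ => ENNReal.ofReal (Real.exp (-(s * r ^ (2*β))))) := by
    fun_prop
  rw [lintegral_fun_norm_addHaar' volume (fun r => ENNReal.ofReal (Real.exp (-(s * r ^ (2*β))))) hg,
    finrank_euclideanSpace_fin]
  rw [EuclideanSpace.volume_ball (Fin m) 0 1]
  simp only [Fintype.card_fin]
  -- one-dimensional integral
  have hm' : (1:ℝ) ≤ (m:ℝ) := Nat.one_le_cast.2 hm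
  have hq : (-1:ℝ) < (m:ℝ) - 1 := by linarith
  have h1 : ∫⁻ y in Set.Ioi (0:ℝ), ENNReal.ofReal (y ^ (m - 1)) *
        ENNReal.ofReal (Real.exp (-(s * y ^ (2*β))))
      = ENNReal.ofReal (s ^ (-((m:ℝ))/(2*β)) * (1/(2*β)) * Real.Gamma ((m:ℝ)/(2*β))) := by
    have heq : ∀ y ∈ Set.Ioi (0:ℝ), ENNReal.ofReal (y ^ (m - 1)) *
          ENNReal.ofReal (Real.exp (-(s * y ^ (2*β))))
        = ENNReal.ofReal (y ^ ((m:ℝ) - 1) * Real.exp (-s * y ^ (2*β))) := by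
      intro y hy
      have hy' : (0:ℝ) < y := hy
      rw [← ENNReal.ofReal_mul (by positivity)]
      congr 2
      · rw [← Real.rpow_natCast y (m-1), Nat.cast_sub hm, Nat.cast_one]
      · rw [neg_mul]
    rw [setLIntegral_congr_fun measurableSet_Ioi heq]
    rw [← ofReal_integral_eq_lintegral_ofReal
      (integrableOn_rpow_mul_exp_neg_mul_rpow' (by positivity) hq hs)
      ((ae_restrict_iff' measurableSet_Ioi).2 (Filter.Eventually.of_forall (fun y hy => by
        have : (0:ℝ) < y := hy; positivity)))]
    rw [integral_rpow_mul_exp_neg_mul_rpow (by positivity) hq hs]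
    norm_num
  rw [h1]
  have hΓpos : 0 < Real.Gamma ((m:ℝ)/2) := Real.Gamma_pos_of_pos (by positivity)
  have hΓpos1 : 0 < Real.Gamma ((m:ℝ)/2 + 1) := Real.Gamma_pos_of_pos (by positivity)
  have hΓbpos : 0 < Real.Gamma ((m:ℝ)/(2*β)) := Real.Gamma_pos_of_pos (by positivity)
  have hΓ2 : Real.Gamma ((m:ℝ)/2 + 1) = ((m:ℝ)/2) * Real.Gamma ((m:ℝ)/2) :=
    Real.Gamma_add_one (by positivity)
  have hsqrt : Real.sqrt π ^ m = π ^ ((m:ℝ)/2) := by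
    rw [Real.sqrt_eq_rpow, ← Real.rpow_natCast (π ^ ((1:ℝ)/2)) m, ← Real.rpow_mul pi_pos.le]
    norm_num
    rw [mul_comm, mul_one_div]
  simp only [ENNReal.ofReal_one, one_pow, one_mul]
  rw [← ENNReal.ofReal_natCast m,
    ← ENNReal.ofReal_mul (by positivity),
    ← ENNReal.ofReal_mul (by positivity)]
  congr 1
  rw [hsqrt, hΓ2, neg_div]
  rw [show π ^ ((m:ℝ)/2) * Real.Gamma ((m:ℝ)/(2*β)) / (β * Real.Gamma ((m:ℝ)/2))
        * s ^ (-((m:ℝ)/(2*β)))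
      = (π ^ ((m:ℝ)/2) * Real.Gamma ((m:ℝ)/(2*β)) * s ^ (-((m:ℝ)/(2*β))))
        / (β * Real.Gamma ((m:ℝ)/2)) from by ring]
  field_simp
/-- The standardised MGGD(0, Iₘ, β) measure on ℝ^m: the measure with Lebesgue density
`[β Γ(m/2) / (π^{m/2} Γ(m/(2β)) 2^{m/(2β)})] exp(−(1/2)‖x‖^{2β})`. -/
noncomputable def mggdStd (m : ℕ) (β : ℝ) : Measure (EuclideanSpace ℝ (Fin m)) :=
  volume.withDensity fun x => ENNReal.ofReal
    (β * Real.Gamma ((m : ℝ) / 2) /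
        (Real.pi ^ ((m : ℝ) / 2) * Real.Gamma ((m : ℝ) / (2 * β)) *
          (2 : ℝ) ^ ((m : ℝ) / (2 * β))) *
      Real.exp (-(1 / 2) * ‖x‖ ^ (2 * β)))

noncomputable def mggdC (m : ℕ) (β : ℝ) : ℝ :=
  β * Real.Gamma ((m : ℝ) / 2) /
    (Real.pi ^ ((m : ℝ) / 2) * Real.Gamma ((m : ℝ) / (2 * β)) * (2 : ℝ) ^ ((m : ℝ) / (2 * β)))

lemma mggdC_pos (m : ℕ) (hm : 1 ≤ m) {β : ℝ} (hβ : 0 < β) : 0 < mggdC m β := by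
  have hΓpos : 0 < Real.Gamma ((m:ℝ)/2) := Real.Gamma_pos_of_pos (by positivity)
  have hΓbpos : 0 < Real.Gamma ((m:ℝ)/(2*β)) := Real.Gamma_pos_of_pos (by positivity)
  unfold mggdC
  positivity

lemma mggdStd_eq (m : ℕ) (β : ℝ) : mggdStd m β = volume.withDensity
    (fun x => ENNReal.ofReal (mggdC m β * Real.exp (-(1/2 * ‖x‖ ^ (2*β))))) := by
  unfold mggdStd mggdC
  congr 1 with x
  rw [neg_mul]

lemma mggd_lintegral (m : ℕ) (hm : 1 ≤ m) {β s : ℝ} (hβ : 0 < β) (hs : 0 < s) :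
    ∫⁻ x : EuclideanSpace ℝ (Fin m),
        ENNReal.ofReal (mggdC m β * Real.exp (-(s * ‖x‖ ^ (2*β))))
      = ENNReal.ofReal ((2*s) ^ (-((m:ℝ)/(2*β)))) := by
  have hc : 0 < mggdC m β := mggdC_pos m hm hβ
  have hmeas : Measurable (fun x : EuclideanSpace ℝ (Fin m) =>
      ENNReal.ofReal (Real.exp (-(s * ‖x‖ ^ (2*β))))) := by fun_prop
  simp_rw [ENNReal.ofReal_mul hc.le]
  rw [lintegral_const_mul _ hmeas, lintegral_exp_neg_norm_rpow m hm hβ hs,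
    ← ENNReal.ofReal_mul hc.le]
  congr 1
  have hΓpos : 0 < Real.Gamma ((m:ℝ)/2) := Real.Gamma_pos_of_pos (by positivity)
  have hΓbpos : 0 < Real.Gamma ((m:ℝ)/(2*β)) := Real.Gamma_pos_of_pos (by positivity)
  have hpi : (0:ℝ) < π ^ ((m:ℝ)/2) := by positivity
  rw [Real.mul_rpow (by norm_num) hs.le, Real.rpow_neg (by norm_num : (0:ℝ) ≤ 2),
    Real.rpow_neg hs.le]
  unfold mggdC
  field_simp

lemma mggd_isProb (m : ℕ) (hm : 1 ≤ m) {β : ℝ} (hβ : 0 < β) :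
    IsProbabilityMeasure (mggdStd m β) := by
  constructor
  rw [mggdStd_eq, withDensity_apply _ MeasurableSet.univ, Measure.restrict_univ]
  have h := mggd_lintegral m hm hβ (one_half_pos)
  rw [h]
  norm_num

lemma half_pow_neg (m : ℕ) (β : ℝ) :
    ((1:ℝ)/2) ^ (-((m:ℝ)/(2*β))) = 2 ^ ((m:ℝ)/(2*β)) := by
  rw [one_div, Real.inv_rpow (by norm_num), Real.rpow_neg (by norm_num), inv_inv]

lemma mggd_tail_upper (m : ℕ) (hm : 1 ≤ m) {β : ℝ} (hβ : 0 < β) {t : ℝ} (ht : 0 ≤ t) :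
    mggdStd m β {x | t ≤ ‖x‖}
      ≤ ENNReal.ofReal (Real.exp (-(t ^ (2*β) / 4)) * 2 ^ ((m:ℝ)/(2*β))) := by
  have hc : 0 < mggdC m β := mggdC_pos m hm hβ
  have hS : MeasurableSet {x : EuclideanSpace ℝ (Fin m) | t ≤ ‖x‖} :=
    measurableSet_le measurable_const (by fun_prop)
  rw [mggdStd_eq, withDensity_apply _ hS]
  have step1 : ∫⁻ x in {x : EuclideanSpace ℝ (Fin m) | t ≤ ‖x‖},
        ENNReal.ofReal (mggdC m β * Real.exp (-(1/2 * ‖x‖ ^ (2*β))))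
      ≤ ∫⁻ x in {x : EuclideanSpace ℝ (Fin m) | t ≤ ‖x‖},
        ENNReal.ofReal (Real.exp (-(t ^ (2*β) / 4)) *
          (mggdC m β * Real.exp (-(1/4 * ‖x‖ ^ (2*β))))) := by
    apply setLIntegral_mono (by fun_prop)
    intro x hx
    apply ENNReal.ofReal_le_ofReal
    have hxt : t ^ (2*β) ≤ ‖x‖ ^ (2*β) := Real.rpow_le_rpow ht hx (by positivity)
    rw [show Real.exp (-(t ^ (2*β) / 4)) * (mggdC m β * Real.exp (-(1/4 * ‖x‖ ^ (2*β))))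
        = mggdC m β * (Real.exp (-(t ^ (2*β) / 4)) * Real.exp (-(1/4 * ‖x‖ ^ (2*β)))) from
      by ring, ← Real.exp_add]
    apply mul_le_mul_of_nonneg_left _ hc.le
    apply Real.exp_le_exp.2
    linarith
  refine step1.trans ?_
  calc ∫⁻ x in {x : EuclideanSpace ℝ (Fin m) | t ≤ ‖x‖},
        ENNReal.ofReal (Real.exp (-(t ^ (2*β) / 4)) *
          (mggdC m β * Real.exp (-(1/4 * ‖x‖ ^ (2*β)))))
      ≤ ∫⁻ x, ENNReal.ofReal (Real.exp (-(t ^ (2*β) / 4)) *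
          (mggdC m β * Real.exp (-(1/4 * ‖x‖ ^ (2*β))))) := setLIntegral_le_lintegral _ _
    _ = ENNReal.ofReal (Real.exp (-(t ^ (2*β) / 4))) *
          ∫⁻ x, ENNReal.ofReal (mggdC m β * Real.exp (-(1/4 * ‖x‖ ^ (2*β)))) := by
        simp_rw [ENNReal.ofReal_mul (Real.exp_nonneg _)]
        rw [lintegral_const_mul _ (by fun_prop)]
    _ ≤ ENNReal.ofReal (Real.exp (-(t ^ (2*β) / 4)) * 2 ^ ((m:ℝ)/(2*β))) := by
        rw [mggd_lintegral m hm hβ (by norm_num : (0:ℝ) < 1/4),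
          show (2 * (1/4) : ℝ) = 1/2 from by norm_num, half_pow_neg,
          ENNReal.ofReal_mul (Real.exp_nonneg _)]

lemma mggd_tail_lower (m : ℕ) (hm : 1 ≤ m) {β : ℝ} (hβ : 0 < β) {t : ℝ} (ht : 0 ≤ t) :
    mggdStd m β {x | ‖x‖ ≤ t}
      ≤ ENNReal.ofReal (Real.exp (t ^ (2*β) / 2) * 2 ^ (-((m:ℝ)/(2*β)))) := by
  have hc : 0 < mggdC m β := mggdC_pos m hm hβ
  have hS : MeasurableSet {x : EuclideanSpace ℝ (Fin m) | ‖x‖ ≤ t} :=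
    measurableSet_le (by fun_prop) measurable_const
  rw [mggdStd_eq, withDensity_apply _ hS]
  have step1 : ∫⁻ x in {x : EuclideanSpace ℝ (Fin m) | ‖x‖ ≤ t},
        ENNReal.ofReal (mggdC m β * Real.exp (-(1/2 * ‖x‖ ^ (2*β))))
      ≤ ∫⁻ x in {x : EuclideanSpace ℝ (Fin m) | ‖x‖ ≤ t},
        ENNReal.ofReal (Real.exp (t ^ (2*β) / 2) *
          (mggdC m β * Real.exp (-(1 * ‖x‖ ^ (2*β))))) := by
    apply setLIntegral_mono (by fun_prop)
    intro x hx
    apply ENNReal.ofReal_le_ofReal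
    have hxt : ‖x‖ ^ (2*β) ≤ t ^ (2*β) := Real.rpow_le_rpow (norm_nonneg x) hx (by positivity)
    rw [show Real.exp (t ^ (2*β) / 2) * (mggdC m β * Real.exp (-(1 * ‖x‖ ^ (2*β))))
        = mggdC m β * (Real.exp (t ^ (2*β) / 2) * Real.exp (-(1 * ‖x‖ ^ (2*β)))) from
      by ring, ← Real.exp_add]
    apply mul_le_mul_of_nonneg_left _ hc.le
    apply Real.exp_le_exp.2
    linarith
  refine step1.trans ?_
  calc ∫⁻ x in {x : EuclideanSpace ℝ (Fin m) | ‖x‖ ≤ t},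
        ENNReal.ofReal (Real.exp (t ^ (2*β) / 2) *
          (mggdC m β * Real.exp (-(1 * ‖x‖ ^ (2*β)))))
      ≤ ∫⁻ x, ENNReal.ofReal (Real.exp (t ^ (2*β) / 2) *
          (mggdC m β * Real.exp (-(1 * ‖x‖ ^ (2*β))))) := setLIntegral_le_lintegral _ _
    _ = ENNReal.ofReal (Real.exp (t ^ (2*β) / 2)) *
          ∫⁻ x, ENNReal.ofReal (mggdC m β * Real.exp (-(1 * ‖x‖ ^ (2*β)))) := by
        simp_rw [ENNReal.ofReal_mul (Real.exp_nonneg _)]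
        rw [lintegral_const_mul _ (by fun_prop)]
    _ ≤ ENNReal.ofReal (Real.exp (t ^ (2*β) / 2) * 2 ^ (-((m:ℝ)/(2*β)))) := by
        rw [mggd_lintegral m hm hβ (by norm_num : (0:ℝ) < 1),
          show (2 * 1 : ℝ) = 2 from by norm_num,
          ENNReal.ofReal_mul (Real.exp_nonneg _)]

lemma decay_upper {γ c : ℝ} (hγ : 1 < γ) :
    Tendsto (fun x : ℝ => Real.exp (c * x - x ^ γ / 4)) atTop (𝓝 0) := by
  apply Real.tendsto_exp_atBot.comp
  have heq : ∀ᶠ x : ℝ in atTop, x * (c - x ^ (γ - 1) / 4) = c * x - x ^ γ / 4 := by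
    filter_upwards [eventually_gt_atTop (0:ℝ)] with x hx
    have : x ^ γ = x * x ^ (γ - 1) := by
      nth_rewrite 2 [← Real.rpow_one x]
      rw [← Real.rpow_add hx]
      ring_nf
    rw [this]; ring
  apply Tendsto.congr' heq
  apply Tendsto.atTop_mul_atBot₀ tendsto_id
  apply tendsto_atBot_add_const_left
  have h1 : Tendsto (fun x : ℝ => x ^ (γ - 1) / 4) atTop atTop :=
    (tendsto_rpow_atTop (by linarith)).atTop_div_const (by norm_num)
  simpa using tendsto_neg_atBot_iff.mpr h1

lemma decay_lower {γ c : ℝ} (hγ : γ < 1) (hc : 0 < c) :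
    Tendsto (fun x : ℝ => Real.exp (x ^ γ / 2 - c * x)) atTop (𝓝 0) := by
  apply Real.tendsto_exp_atBot.comp
  have heq : ∀ᶠ x : ℝ in atTop, x * (x ^ (γ - 1) / 2 - c) = x ^ γ / 2 - c * x := by
    filter_upwards [eventually_gt_atTop (0:ℝ)] with x hx
    have : x ^ γ = x * x ^ (γ - 1) := by
      nth_rewrite 2 [← Real.rpow_one x]
      rw [← Real.rpow_add hx]
      ring_nf
    rw [this]; ring
  apply Tendsto.congr' heq
  apply Tendsto.atTop_mul_neg (show -c < 0 by linarith) tendsto_id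
  have h0 : Tendsto (fun x : ℝ => x ^ (γ - 1)) atTop (𝓝 0) := by
    have := tendsto_rpow_neg_atTop (show 0 < 1 - γ by linarith)
    simpa [neg_sub] using this
  have := (h0.div_const 2).sub_const c
  simpa using this

lemma pi_cylinder (m n : ℕ) {β : ℝ} (hm : 1 ≤ m) (hβ : 0 < β) (j : Fin n)
    (D : Set (EuclideanSpace ℝ (Fin m))) :
    (Measure.pi fun _ : Fin n => mggdStd m β) {f | f j ∈ D} = mggdStd m β D := by
  haveI : IsProbabilityMeasure (mggdStd m β) := mggd_isProb m hm hβ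
  have hset : {f : Fin n → EuclideanSpace ℝ (Fin m) | f j ∈ D}
      = Set.pi Set.univ (fun i => if i = j then D else Set.univ) := by
    ext f
    simp only [Set.mem_setOf_eq, Set.mem_pi, Set.mem_univ, forall_true_left]
    constructor
    · intro hf i
      split_ifs with hij
      · rw [hij]; exact hf
      · trivial
    · intro hf
      have := hf j
      simpa using this
  rw [hset, Measure.pi_pi]
  calc ∏ i : Fin n, mggdStd m β (if i = j then D else Set.univ)
      = ∏ i : Fin n, (if i = j then mggdStd m β D else 1) := by
        refine Finset.prod_congr rfl (fun i _ => ?_)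
        split_ifs <;> simp
    _ = mggdStd m β D := by
        rw [Finset.prod_ite_eq']
        simp


/-- Sample-level shell separation: fix `0 < β₁ < β₀` and `n ≥ 1`. For each
`m`, let `X₁,…,Xₙ` be i.i.d. `MGGD(0, Iₘ, β₀)` and, independently, `Y₁,…,Yₙ` be i.i.d.
`MGGD(0, Iₘ, β₁)` (joint law the product of the two i.i.d. product measures). Then
`P(min_i ‖Yᵢ‖ > max_j ‖Xⱼ‖) → 1` as `m → ∞`. -/
theorem mggd_sample_shell_separation
    (β₀ β₁ : ℝ) (hβ₁ : 0 < β₁) (h : β₁ < β₀) (n : ℕ) (hn : 1 ≤ n) :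
    Tendsto (fun m : ℕ =>
        ((Measure.pi fun _ : Fin n => mggdStd m β₀).prod
            (Measure.pi fun _ : Fin n => mggdStd m β₁))
          {p : (Fin n → EuclideanSpace ℝ (Fin m)) × (Fin n → EuclideanSpace ℝ (Fin m)) |
            ∀ i j : Fin n, ‖p.1 j‖ < ‖p.2 i‖})
      atTop (𝓝 1) := by
  have hβ₀ : 0 < β₀ := hβ₁.trans h
  set α : ℝ := (1/(2*β₀) + 1/(2*β₁))/2 with hα
  have hα0 : 0 < α := by positivity
  have hγ₀ : 1 < α * (2*β₀) := by
    have e0 : α * (2*β₀) = 1/2 + β₀/(2*β₁) := by rw [hα]; field_simp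
    have e1 : (1:ℝ)/2 < β₀/(2*β₁) := by
      rw [div_lt_div_iff₀ (by norm_num) (by positivity)]; linarith
    rw [e0]; linarith
  have hγ₁ : α * (2*β₁) < 1 := by
    have e0 : α * (2*β₁) = 1/2 + β₁/(2*β₀) := by rw [hα]; field_simp; ring
    have e1 : β₁/(2*β₀) < (1:ℝ)/2 := by
      rw [div_lt_div_iff₀ (by positivity) (by norm_num)]; linarith
    rw [e0]; linarith
  set a : ℕ → ℝ := fun m =>
    Real.exp (-(((m:ℝ) ^ (α*(2*β₀)))/4)) * 2 ^ ((m:ℝ)/(2*β₀)) with ha_def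
  set b : ℕ → ℝ := fun m =>
    Real.exp (((m:ℝ) ^ (α*(2*β₁)))/2) * 2 ^ (-((m:ℝ)/(2*β₁))) with hb_def
  have ha : Tendsto a atTop (𝓝 0) := by
    have heq : ∀ m : ℕ, a m
        = Real.exp ((Real.log 2 / (2*β₀)) * m - ((m:ℝ) ^ (α*(2*β₀)))/4) := by
      intro m
      rw [ha_def]
      simp only []
      rw [Real.rpow_def_of_pos two_pos, ← Real.exp_add]
      congr 1
      ring
    exact Tendsto.congr (fun m => (heq m).symm)
      ((decay_upper hγ₀).comp tendsto_natCast_atTop_atTop)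
  have hb : Tendsto b atTop (𝓝 0) := by
    have heq : ∀ m : ℕ, b m
        = Real.exp (((m:ℝ) ^ (α*(2*β₁)))/2 - (Real.log 2 / (2*β₁)) * m) := by
      intro m
      rw [hb_def]
      simp only []
      rw [Real.rpow_def_of_pos two_pos, ← Real.exp_add]
      congr 1
      ring
    exact Tendsto.congr (fun m => (heq m).symm)
      ((decay_lower hγ₁ (div_pos (Real.log_pos one_lt_two) (by positivity))).comp
        tendsto_natCast_atTop_atTop)
  set g : ℕ → ℝ≥0∞ := fun m => n * ENNReal.ofReal (a m) + n * ENNReal.ofReal (b m) with hg_def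
  have hg : Tendsto g atTop (𝓝 0) := by
    have h1 : Tendsto (fun m => ENNReal.ofReal (a m)) atTop (𝓝 0) := by
      simpa using ENNReal.tendsto_ofReal ha
    have h2 : Tendsto (fun m => ENNReal.ofReal (b m)) atTop (𝓝 0) := by
      simpa using ENNReal.tendsto_ofReal hb
    have h3 := ENNReal.Tendsto.const_mul h1 (Or.inr (ENNReal.natCast_ne_top n))
    have h4 := ENNReal.Tendsto.const_mul h2 (Or.inr (ENNReal.natCast_ne_top n))
    simpa using h3.add h4
  have hlow : Tendsto (fun m => 1 - g m) atTop (𝓝 1) := by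
    simpa using ENNReal.Tendsto.sub (tendsto_const_nhds (x := (1:ℝ≥0∞))) hg
      (Or.inl ENNReal.one_ne_top)
  refine tendsto_of_tendsto_of_tendsto_of_le_of_le' hlow tendsto_const_nhds ?_ ?_
  · filter_upwards [eventually_ge_atTop 1] with m hm
    haveI i₀ : IsProbabilityMeasure (mggdStd m β₀) := mggd_isProb m hm hβ₀
    haveI i₁ : IsProbabilityMeasure (mggdStd m β₁) := mggd_isProb m hm hβ₁
    set E := EuclideanSpace ℝ (Fin m)
    set νx := Measure.pi fun _ : Fin n => mggdStd m β₀ with hνx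
    set νy := Measure.pi fun _ : Fin n => mggdStd m β₁ with hνy
    set ν := νx.prod νy with hν
    set A := {p : (Fin n → E) × (Fin n → E) | ∀ i j : Fin n, ‖p.1 j‖ < ‖p.2 i‖} with hA_def
    have hA : MeasurableSet A := by
      have : A = ⋂ (i : Fin n), ⋂ (j : Fin n),
          {p : (Fin n → E) × (Fin n → E) | ‖p.1 j‖ < ‖p.2 i‖} := by
        ext p; simp [hA_def, Set.mem_iInter]
      rw [this]
      exact MeasurableSet.iInter fun i => MeasurableSet.iInter fun j =>
        measurableSet_lt (((measurable_pi_apply j).comp measurable_fst).norm)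
          (((measurable_pi_apply i).comp measurable_snd).norm)
    set t := (m:ℝ) ^ α with ht_def
    have ht : 0 ≤ t := Real.rpow_nonneg (Nat.cast_nonneg m) α
    have hsub : Aᶜ ⊆ (⋃ j : Fin n, {p : (Fin n → E) × (Fin n → E) | t ≤ ‖p.1 j‖})
        ∪ ⋃ i : Fin n, {p : (Fin n → E) × (Fin n → E) | ‖p.2 i‖ ≤ t} := by
      intro p hp
      simp only [hA_def, Set.mem_compl_iff, Set.mem_setOf_eq, not_forall, not_lt] at hp
      obtain ⟨i, j, hij⟩ := hp
      by_cases hx : t ≤ ‖p.1 j‖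
      · exact Or.inl (Set.mem_iUnion.2 ⟨j, hx⟩)
      · exact Or.inr (Set.mem_iUnion.2 ⟨i, le_trans hij (le_of_not_ge hx)⟩)
    have hx_bound : ∀ j : Fin n, ν {p : (Fin n → E) × (Fin n → E) | t ≤ ‖p.1 j‖}
        ≤ ENNReal.ofReal (a m) := by
      intro j
      have hset : {p : (Fin n → E) × (Fin n → E) | t ≤ ‖p.1 j‖}
          = {f : Fin n → E | t ≤ ‖f j‖} ×ˢ (Set.univ : Set (Fin n → E)) := by
        ext p; simp
      rw [hν, hset, Measure.prod_prod, measure_univ, mul_one, hνx]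
      have := pi_cylinder m n hm hβ₀ j {x : E | t ≤ ‖x‖}
      rw [show {f : Fin n → E | f j ∈ {x : E | t ≤ ‖x‖}} = {f : Fin n → E | t ≤ ‖f j‖}
        from rfl] at this
      rw [this]
      have htail := mggd_tail_upper m hm hβ₀ ht
      rwa [ht_def, ← Real.rpow_mul (Nat.cast_nonneg m)] at htail
    have hy_bound : ∀ i : Fin n, ν {p : (Fin n → E) × (Fin n → E) | ‖p.2 i‖ ≤ t}
        ≤ ENNReal.ofReal (b m) := by
      intro i
      have hset : {p : (Fin n → E) × (Fin n → E) | ‖p.2 i‖ ≤ t}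
          = (Set.univ : Set (Fin n → E)) ×ˢ {f : Fin n → E | ‖f i‖ ≤ t} := by
        ext p; simp
      rw [hν, hset, Measure.prod_prod, measure_univ, one_mul, hνy]
      have := pi_cylinder m n hm hβ₁ i {x : E | ‖x‖ ≤ t}
      rw [show {f : Fin n → E | f i ∈ {x : E | ‖x‖ ≤ t}} = {f : Fin n → E | ‖f i‖ ≤ t}
        from rfl] at this
      rw [this]
      have htail := mggd_tail_lower m hm hβ₁ ht
      rwa [ht_def, ← Real.rpow_mul (Nat.cast_nonneg m)] at htail
    have hcompl : ν Aᶜ ≤ g m := by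
      calc ν Aᶜ ≤ ν ((⋃ j : Fin n, {p : (Fin n → E) × (Fin n → E) | t ≤ ‖p.1 j‖})
            ∪ ⋃ i : Fin n, {p : (Fin n → E) × (Fin n → E) | ‖p.2 i‖ ≤ t}) :=
          measure_mono hsub
        _ ≤ ν (⋃ j : Fin n, {p : (Fin n → E) × (Fin n → E) | t ≤ ‖p.1 j‖})
            + ν (⋃ i : Fin n, {p : (Fin n → E) × (Fin n → E) | ‖p.2 i‖ ≤ t}) :=
          measure_union_le _ _
        _ ≤ (∑ j : Fin n, ν {p : (Fin n → E) × (Fin n → E) | t ≤ ‖p.1 j‖})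
            + ∑ i : Fin n, ν {p : (Fin n → E) × (Fin n → E) | ‖p.2 i‖ ≤ t} :=
          add_le_add (measure_iUnion_fintype_le _ _) (measure_iUnion_fintype_le _ _)
        _ ≤ (∑ _j : Fin n, ENNReal.ofReal (a m)) + ∑ _i : Fin n, ENNReal.ofReal (b m) :=
          add_le_add (Finset.sum_le_sum fun j _ => hx_bound j)
            (Finset.sum_le_sum fun i _ => hy_bound i)
        _ = g m := by
          simp [Finset.sum_const, Finset.card_univ, nsmul_eq_mul, hg_def]
    have h2 : ν A = 1 - ν Aᶜ := by
      have := prob_compl_eq_one_sub (μ := ν) hA.compl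
      rwa [compl_compl] at this
    exact le_trans (tsub_le_tsub_left hcompl 1) (le_of_eq h2.symm)
  · filter_upwards [eventually_ge_atTop 1] with m hm
    haveI i₀ : IsProbabilityMeasure (mggdStd m β₀) := mggd_isProb m hm hβ₀
    haveI i₁ : IsProbabilityMeasure (mggdStd m β₁) := mggd_isProb m hm hβ₁
    exact prob_le_one
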